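/- Let t=(a,b,c) be a problematic triangle of G and let M' be an (l,u)-matching of the auxiliary graph G'. Then exactly two of the global vertices u_a, u_b, u_c are matched in M' to subdivision vertices of t, and these two subdivision vertices are adjacent to two distinct vertices of t. In particular, if M' contains exactly four of the six half-edges of t, then the two half-edges of t that do not belong to M' are not incident to the same vertex of t. -/
import Mathlib


open Finset
open scoped Classical

namespace Paper

variable {V : Type*}

/-- `t` is the vertex set of a triangle (cycle of length 3) of `G`. -/
def IsTriangle (G : SimpleGraph V) (t : Finset V) : Prop :=
  t.card = 3 ∧ ∀ x ∈ t, ∀ y ∈ t, x ≠ y → G.Adj x y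

/-- The (three) edges of a triangle with vertex set `t`. -/
def triEdges [DecidableEq V] (t : Finset V) : Finset (Sym2 V) :=
  t.sym2.filter (fun e => ¬ e.IsDiag)

/-- Some connected component of `G` is isomorphic to the complete graph `K₄`:
there are four pairwise distinct, pairwise adjacent vertices that have no
neighbours outside of these four vertices. -/
def HasK4Component (G : SimpleGraph V) : Prop :=
  ∃ a b c d : V, a ≠ b ∧ a ≠ c ∧ a ≠ d ∧ b ≠ c ∧ b ≠ d ∧ c ≠ d ∧
    G.Adj a b ∧ G.Adj a c ∧ G.Adj a d ∧ G.Adj b c ∧ G.Adj b d ∧ G.Adj c d ∧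
    ∀ x y : V, (x = a ∨ x = b ∨ x = c ∨ x = d) → G.Adj x y →
      (y = a ∨ y = b ∨ y = c ∨ y = d)

/-- The degree of the vertex `v` in the edge set `M`, i.e. the number of edges
of `M` incident to `v`. -/
noncomputable def degIn (M : Finset (Sym2 V)) (v : V) : ℕ :=
  (M.filter (fun e => v ∈ e)).card

/-- `M` is a 2-matching of `G`: a set of edges of `G` such that every vertex is
incident to at most two of its edges. -/
def Is2Matching (G : SimpleGraph V) (M : Finset (Sym2 V)) : Prop :=
  (∀ e ∈ M, e ∈ G.edgeSet) ∧ ∀ v : V, degIn M v ≤ 2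

/-- No triangle of `G` has all three of its edges in `M`. -/
def TriangleFree [DecidableEq V] (G : SimpleGraph V) (M : Finset (Sym2 V)) : Prop :=
  ∀ t : Finset V, IsTriangle G t → ¬ triEdges t ⊆ M

/-- The triangle `t` is unproblematic: some other triangle `t'` shares an edge
with `t` and `w(t) ≤ w(t')`. -/
def TriUnprob [DecidableEq V] (G : SimpleGraph V) (w : Sym2 V → ℝ) (t : Finset V) : Prop :=
  ∃ t' : Finset V, IsTriangle G t' ∧ t' ≠ t ∧ (triEdges t ∩ triEdges t').Nonempty ∧
    ∑ e ∈ triEdges t, w e ≤ ∑ e ∈ triEdges t', w e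

/-- The triangle `t` is problematic. -/
def ProblemTri [DecidableEq V] (G : SimpleGraph V) (w : Sym2 V → ℝ) (t : Finset V) : Prop :=
  IsTriangle G t ∧ ¬ TriUnprob G w t

/-- The new vertices of the auxiliary graph `G'` for the triangle-free
2-matching problem: `sub p q` is the subdivision vertex `v^p_q`, `glob d` is
the global vertex `u_d`, and `globT t` is the global vertex `u_t` of the
problematic triangle with vertex set `t`. -/
inductive NV (V : Type*) where
  | sub : V → V → NV V
  | glob : V → NV V
  | globT : Finset V → NV V

section TriAux

variable [DecidableEq V] (G : SimpleGraph V) (w : Sym2 V → ℝ)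

/-- `e` is an edge of some problematic triangle of `G`. -/
def InPT (e : Sym2 V) : Prop :=
  ∃ t : Finset V, ProblemTri G w t ∧ e ∈ triEdges t

/-- The weight `r_p` of the half-edges of a problematic triangle incident to
`p`, where `q` is the other endpoint of the subdivided edge: the unique reals
`r` on the vertices of the triangle with `r_x + r_y = w (x, y)` for the three
edges `(x, y)` of the triangle. -/
noncomputable def halfW (p q : V) : ℝ :=
  if h : ∃ t : Finset V, ProblemTri G w t ∧ s(p, q) ∈ triEdges t then
    (w s(p, q) + ∑ z ∈ h.choose \ {p, q}, (w s(p, z) - w s(q, z))) / 2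
  else 0

/-- The base adjacency relation of the auxiliary graph `G'`: edges of `G` not
lying in a problematic triangle are kept; each edge `(p, q)` of a problematic
triangle is replaced by the half-edges `(p, v^p_q)`, `(q, v^q_p)` and the
eliminator `(v^p_q, v^q_p)`; for a problematic triangle `t = (a, b, c)` the
global vertex `u_d` (for `d ∈ {a, b, c}`) is joined to `u_t` and to the
subdivision vertices `v^d_q` connected to `d`. -/
def triRel : V ⊕ NV V → V ⊕ NV V → Prop
  | Sum.inl x, Sum.inl y => G.Adj x y ∧ ¬ InPT G w s(x, y)
  | Sum.inl p, Sum.inr (NV.sub p' q) => p = p' ∧ InPT G w s(p', q)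
  | Sum.inr (NV.sub p q), Sum.inr (NV.sub p' q') => p = q' ∧ q = p' ∧ InPT G w s(p, q)
  | Sum.inr (NV.glob d), Sum.inr (NV.globT t) => ProblemTri G w t ∧ d ∈ t
  | Sum.inr (NV.glob d), Sum.inr (NV.sub p q) => d = p ∧ InPT G w s(p, q)
  | _, _ => False

/-- The auxiliary graph `G'` for the triangle-free 2-matching problem. -/
def triAuxG : SimpleGraph (V ⊕ NV V) := SimpleGraph.fromRel (triRel G w)

/-- One-sided weight function on ordered pairs of vertices of `G'`:
kept edges of `G` get weight `w`, the half-edge `(p, v^p_q)` gets weight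
`r_p = halfW p q`, and all other edges (eliminators, edges at global
vertices) get weight `0`. (It is symmetrized in `triW` below.) -/
noncomputable def triWbase : V ⊕ NV V → V ⊕ NV V → ℝ
  | Sum.inl x, Sum.inl y => w s(x, y) / 2
  | Sum.inl p, Sum.inr (NV.sub p' q) => if p = p' then halfW G w p q else 0
  | _, _ => 0

/-- The weight function `w'` of the auxiliary graph `G'`. -/
noncomputable def triW : Sym2 (V ⊕ NV V) → ℝ :=
  Sym2.lift ⟨fun x y => triWbase G w x y + triWbase G w y x,
    fun _ _ => add_comm _ _⟩

/-- The actual vertices of `G'`: all vertices of `G` together with the gadget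
vertices of the problematic triangles. -/
def triMeaning : V ⊕ NV V → Prop
  | Sum.inl _ => True
  | Sum.inr (NV.sub p q) => InPT G w s(p, q)
  | Sum.inr (NV.glob d) => ∃ t : Finset V, ProblemTri G w t ∧ d ∈ t
  | Sum.inr (NV.globT t) => ProblemTri G w t

/-- Lower capacities: `l(v) = 0` for `v ∈ V` and `l(v) = 1` for new vertices. -/
def triLowCap : V ⊕ NV V → ℕ
  | Sum.inl _ => 0
  | Sum.inr _ => 1

/-- Upper capacities: `u(v) = 2` for `v ∈ V` and `u(v) = 1` for new vertices. -/
def triUpCap : V ⊕ NV V → ℕ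
  | Sum.inl _ => 2
  | Sum.inr _ => 1

/-- `M'` is an `(l,u)`-matching of the auxiliary graph `G'`:
a set of edges of `G'` with `l(v) ≤ deg_{M'}(v) ≤ u(v)` for every vertex `v`
of `G'`. -/
def TriLU (M' : Finset (Sym2 (V ⊕ NV V))) : Prop :=
  (∀ e ∈ M', e ∈ (triAuxG G w).edgeSet) ∧
  ∀ v : V ⊕ NV V, triMeaning G w v →
    triLowCap v ≤ degIn M' v ∧ degIn M' v ≤ triUpCap v

end TriAux

section Helpers

lemma mem_triEdges_mk [DecidableEq V] {t : Finset V} {x y : V}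
    (hx : x ∈ t) (hy : y ∈ t) (hxy : x ≠ y) : s(x, y) ∈ triEdges t := by
  simp [triEdges, Finset.mk_mem_sym2_iff, hx, hy, hxy]

lemma triEdges_mem [DecidableEq V] {t : Finset V} {x y : V}
    (h : s(x, y) ∈ triEdges t) : x ∈ t ∧ y ∈ t ∧ x ≠ y := by
  simpa [triEdges, Finset.mk_mem_sym2_iff, and_assoc] using h

lemma degIn_unique {W : Type*} {M : Finset (Sym2 W)} {v : W} (h : degIn M v ≤ 1)
    {e₁ e₂ : Sym2 W} (h1 : e₁ ∈ M) (hv1 : v ∈ e₁) (h2 : e₂ ∈ M) (hv2 : v ∈ e₂) :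
    e₁ = e₂ := by
  by_contra hne
  have hsub : ({e₁, e₂} : Finset (Sym2 W)) ⊆ M.filter (fun e => v ∈ e) := by
    intro e he
    rcases Finset.mem_insert.mp he with rfl | he
    · exact Finset.mem_filter.mpr ⟨h1, hv1⟩
    · rw [Finset.mem_singleton] at he; subst he
      exact Finset.mem_filter.mpr ⟨h2, hv2⟩
  have h2' := Finset.card_le_card hsub
  rw [Finset.card_pair hne] at h2'
  have h3 : (M.filter (fun e => v ∈ e)).card ≤ 1 := h
  omega

lemma degIn_exists {W : Type*} {M : Finset (Sym2 W)} {v : W} (h : 1 ≤ degIn M v) :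
    ∃ e ∈ M, v ∈ e := by
  have h' : 0 < (M.filter (fun e => v ∈ e)).card := lt_of_lt_of_le Nat.zero_lt_one h
  obtain ⟨e, he⟩ := Finset.card_pos.mp h'
  have := Finset.mem_filter.mp he
  exact ⟨e, this.1, this.2⟩

lemma pt_eq_of_mem [Fintype V] [DecidableEq V] {G : SimpleGraph V} [DecidableRel G.Adj]
    (hsub : ∀ v : V, G.degree v ≤ 3) {w : Sym2 V → ℝ} {t t' : Finset V}
    (ht : ProblemTri G w t) (ht' : ProblemTri G w t') {d : V}
    (hd : d ∈ t) (hd' : d ∈ t') : t = t' := by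
  by_contra hne
  by_cases hcase : ∃ x, x ∈ t ∧ x ∈ t' ∧ x ≠ d
  · obtain ⟨x, hxt, hxt', hxd⟩ := hcase
    have hmem : s(d, x) ∈ triEdges t ∩ triEdges t' :=
      Finset.mem_inter.mpr ⟨mem_triEdges_mk hd hxt (Ne.symm hxd),
        mem_triEdges_mk hd' hxt' (Ne.symm hxd)⟩
    rcases le_total (∑ e ∈ triEdges t, w e) (∑ e ∈ triEdges t', w e) with h | h
    · exact ht.2 ⟨t', ht'.1, fun hh => hne hh.symm, ⟨_, hmem⟩, h⟩
    · refine ht'.2 ⟨t, ht.1, hne, ⟨s(d, x), ?_⟩, h⟩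
      rw [Finset.inter_comm]; exact hmem
  · push_neg at hcase
    have h2 : (t.erase d).card = 2 := by rw [Finset.card_erase_of_mem hd, ht.1.1]
    obtain ⟨x, y, hxy, hexy⟩ := Finset.card_eq_two.mp h2
    have h2' : (t'.erase d).card = 2 := by rw [Finset.card_erase_of_mem hd', ht'.1.1]
    obtain ⟨x', y', hxy', hexy'⟩ := Finset.card_eq_two.mp h2'
    have hxe : x ∈ t.erase d := by rw [hexy]; simp
    have hye : y ∈ t.erase d := by rw [hexy]; simp
    have hxe' : x' ∈ t'.erase d := by rw [hexy']; simp
    have hye' : y' ∈ t'.erase d := by rw [hexy']; simp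
    have hxt : x ∈ t := Finset.mem_of_mem_erase hxe
    have hyt : y ∈ t := Finset.mem_of_mem_erase hye
    have hxt' : x' ∈ t' := Finset.mem_of_mem_erase hxe'
    have hyt' : y' ∈ t' := Finset.mem_of_mem_erase hye'
    have hxd : x ≠ d := Finset.ne_of_mem_erase hxe
    have hyd : y ≠ d := Finset.ne_of_mem_erase hye
    have hxd' : x' ≠ d := Finset.ne_of_mem_erase hxe'
    have hyd' : y' ≠ d := Finset.ne_of_mem_erase hye'
    have hxnt' : x ∉ t' := fun hh => hxd (hcase x hxt hh)
    have hynt' : y ∉ t' := fun hh => hyd (hcase y hyt hh)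
    have hxx' : x ≠ x' := fun hh => hxnt' (hh ▸ hxt')
    have hxy2 : x ≠ y' := fun hh => hxnt' (hh ▸ hyt')
    have hyx' : y ≠ x' := fun hh => hynt' (hh ▸ hxt')
    have hyy' : y ≠ y' := fun hh => hynt' (hh ▸ hyt')
    have hsubn : ({x, y, x', y'} : Finset V) ⊆ G.neighborFinset d := by
      intro z hz
      rw [SimpleGraph.mem_neighborFinset]
      simp only [Finset.mem_insert, Finset.mem_singleton] at hz
      rcases hz with rfl | rfl | rfl | rfl
      · exact ht.1.2 d hd z hxt (Ne.symm hxd)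
      · exact ht.1.2 d hd z hyt (Ne.symm hyd)
      · exact ht'.1.2 d hd' z hxt' (Ne.symm hxd')
      · exact ht'.1.2 d hd' z hyt' (Ne.symm hyd')
    have hc4 : ({x, y, x', y'} : Finset V).card = 4 := by
      rw [Finset.card_insert_of_notMem (by simp [hxy, hxx', hxy2]),
        Finset.card_insert_of_notMem (by simp [hyx', hyy']),
        Finset.card_pair hxy']
    have hdeg := Finset.card_le_card hsubn
    rw [hc4] at hdeg
    have hd3 := hsub d
    rw [← SimpleGraph.card_neighborFinset_eq_degree] at hd3
    omega

end Helpers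

/-- Let `t = (a,b,c)` be a problematic triangle of `G` and let
`M'` be an `(l,u)`-matching of the auxiliary graph `G'`. Then exactly two of
the global vertices `u_a, u_b, u_c` are matched in `M'` to subdivision
vertices of `t`, these two subdivision vertices are adjacent to two distinct
vertices of `t`, and if `M'` contains exactly four of the six half-edges of
`t` then the two missing half-edges are not incident to the same vertex of
`t`. (The six half-edges of `t` are indexed by the ordered pairs `(p, q)` of
distinct vertices of `t`, the half-edge of `(p, q)` incident to `p` being
`(p, v^p_q)`.) -/

theorem lu_matching_on_triangle_gadget {V : Type*} [Fintype V] [DecidableEq V]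
    (G : SimpleGraph V) [DecidableRel G.Adj]
    (hsub : ∀ v : V, G.degree v ≤ 3) (hK4 : ¬ HasK4Component G)
    (w : Sym2 V → ℝ) (hw : ∀ e, 0 ≤ w e)
    (a b c : V) (habc : a ≠ b ∧ a ≠ c ∧ b ≠ c)
    (hpt : ProblemTri G w {a, b, c})
    (M' : Finset (Sym2 (V ⊕ NV V))) (hM' : TriLU G w M') :
    ((({a, b, c} : Finset V)).filter (fun d =>
        ∃ p ∈ ({a, b, c} : Finset V), ∃ q ∈ ({a, b, c} : Finset V),
          s(Sum.inr (NV.glob d), Sum.inr (NV.sub p q)) ∈ M')).card = 2 ∧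
    (∀ d₁ ∈ ({a, b, c} : Finset V), ∀ d₂ ∈ ({a, b, c} : Finset V), d₁ ≠ d₂ →
      ∀ p₁ q₁ p₂ q₂ : V,
        p₁ ∈ ({a, b, c} : Finset V) → q₁ ∈ ({a, b, c} : Finset V) →
        p₂ ∈ ({a, b, c} : Finset V) → q₂ ∈ ({a, b, c} : Finset V) →
        s(Sum.inr (NV.glob d₁), Sum.inr (NV.sub p₁ q₁)) ∈ M' →
        s(Sum.inr (NV.glob d₂), Sum.inr (NV.sub p₂ q₂)) ∈ M' →
        p₁ ≠ p₂) ∧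
    (((({a, b, c} : Finset V).offDiag).filter (fun pq =>
        s(Sum.inl pq.1, Sum.inr (NV.sub pq.1 pq.2)) ∈ M')).card = 4 →
      ∀ pq₁ ∈ ({a, b, c} : Finset V).offDiag,
        ∀ pq₂ ∈ ({a, b, c} : Finset V).offDiag,
        s(Sum.inl pq₁.1, Sum.inr (NV.sub pq₁.1 pq₁.2)) ∉ M' →
        s(Sum.inl pq₂.1, Sum.inr (NV.sub pq₂.1 pq₂.2)) ∉ M' →
        pq₁ ≠ pq₂ → pq₁.1 ≠ pq₂.1) := by
  classical
  obtain ⟨hab, hac, hbc⟩ := habc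
  set t : Finset V := {a, b, c} with ht_def
  have htcard : t.card = 3 := hpt.1.1
  have hInPT : ∀ p q : V, p ∈ t → q ∈ t → p ≠ q → InPT G w s(p, q) :=
    fun p q hp hq hpq => ⟨t, hpt, mem_triEdges_mk hp hq hpq⟩
  have hPTuniq : ∀ t' : Finset V, ProblemTri G w t' → ∀ d : V, d ∈ t' → d ∈ t → t' = t :=
    fun t' ht' d hd hdt => pt_eq_of_mem hsub ht' hpt hd hdt
  have hdegT : degIn M' (Sum.inr (NV.globT t)) = 1 := by
    have h := hM'.2 (Sum.inr (NV.globT t)) hpt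
    exact le_antisymm h.2 h.1
  have hdegG : ∀ d : V, d ∈ t → degIn M' (Sum.inr (NV.glob d)) = 1 := by
    intro d hd
    have h := hM'.2 (Sum.inr (NV.glob d)) ⟨t, hpt, hd⟩
    exact le_antisymm h.2 h.1
  have hdegS : ∀ p q : V, p ∈ t → q ∈ t → p ≠ q →
      degIn M' (Sum.inr (NV.sub p q)) = 1 := by
    intro p q hp hq hpq
    have h := hM'.2 (Sum.inr (NV.sub p q)) (hInPT p q hp hq hpq)
    exact le_antisymm h.2 h.1
  have hadj : ∀ e ∈ M', ∀ x y : V ⊕ NV V, e = s(x, y) →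
      triRel G w x y ∨ triRel G w y x := by
    intro e he x y hxy
    have h := hM'.1 e he
    rw [hxy, SimpleGraph.mem_edgeSet] at h
    rw [triAuxG, SimpleGraph.fromRel_adj] at h
    exact h.2
  -- neighbour classification
  have hnbrT : ∀ z : V ⊕ NV V, (triRel G w (Sum.inr (NV.globT t)) z ∨
      triRel G w z (Sum.inr (NV.globT t))) → ∃ d ∈ t, z = Sum.inr (NV.glob d) := by
    rintro (z | nz) h
    · rcases h with h | h
      · exact h.elim
      · exact h.elim
    · cases nz with
      | sub p q => rcases h with h | h <;> exact h.elim
      | glob d =>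
        rcases h with h | h
        · exact h.elim
        · have ht' : ProblemTri G w t := h.1
          exact ⟨d, h.2, rfl⟩
      | globT t'' => rcases h with h | h <;> exact h.elim
  have hnbrG : ∀ d : V, d ∈ t → ∀ z : V ⊕ NV V,
      (triRel G w (Sum.inr (NV.glob d)) z ∨ triRel G w z (Sum.inr (NV.glob d))) →
      (∃ q ∈ t, d ≠ q ∧ z = Sum.inr (NV.sub d q)) ∨ z = Sum.inr (NV.globT t) := by
    rintro d hd (z | nz) h
    · rcases h with h | h <;> exact h.elim
    · cases nz with
      | sub p q =>
        rcases h with h | h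
        · obtain ⟨rfl, hin⟩ := h
          obtain ⟨t'', hpt'', hmem''⟩ := hin
          obtain ⟨hp'', hq'', hpq''⟩ := triEdges_mem hmem''
          have := hPTuniq t'' hpt'' _ hp'' hd
          subst this
          exact Or.inl ⟨q, hq'', hpq'', rfl⟩
        · exact h.elim
      | glob d' => rcases h with h | h <;> exact h.elim
      | globT t'' =>
        rcases h with h | h
        · have := hPTuniq t'' h.1 d h.2 hd
          subst this
          exact Or.inr rfl
        · exact h.elim
  have hnbrS : ∀ p q : V, p ∈ t → q ∈ t → p ≠ q → ∀ z : V ⊕ NV V,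
      (triRel G w (Sum.inr (NV.sub p q)) z ∨ triRel G w z (Sum.inr (NV.sub p q))) →
      z = Sum.inl p ∨ z = Sum.inr (NV.sub q p) ∨ z = Sum.inr (NV.glob p) := by
    rintro p q hp hq hpq (z | nz) h
    · rcases h with h | h
      · exact h.elim
      · obtain ⟨rfl, -⟩ := h
        exact Or.inl rfl
    · cases nz with
      | sub p' q' =>
        rcases h with h | h
        · obtain ⟨h1, h2, -⟩ := h
          subst h1; subst h2
          exact Or.inr (Or.inl rfl)
        · obtain ⟨h1, h2, -⟩ := h
          subst h1; subst h2
          exact Or.inr (Or.inl rfl)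
      | glob d =>
        rcases h with h | h
        · exact h.elim
        · obtain ⟨rfl, -⟩ := h
          exact Or.inr (Or.inr rfl)
      | globT t'' => rcases h with h | h <;> exact h.elim
  -- edge classification
  have eclass_globT : ∀ e ∈ M', Sum.inr (NV.globT t) ∈ e →
      ∃ d ∈ t, e = s(Sum.inr (NV.glob d), Sum.inr (NV.globT t)) := by
    intro e he hv
    induction e using Sym2.ind with
    | _ x y =>
      rw [Sym2.mem_iff] at hv
      rcases hv with rfl | rfl
      · obtain ⟨d, hd, rfl⟩ := hnbrT y (hadj _ he _ _ rfl)
        exact ⟨d, hd, Sym2.eq_swap⟩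
      · obtain ⟨d, hd, rfl⟩ := hnbrT x (Or.symm (hadj _ he _ _ rfl))
        exact ⟨d, hd, rfl⟩
  have eclass_glob : ∀ d : V, d ∈ t → ∀ e ∈ M', Sum.inr (NV.glob d) ∈ e →
      (∃ q ∈ t, d ≠ q ∧ e = s(Sum.inr (NV.glob d), Sum.inr (NV.sub d q))) ∨
      e = s(Sum.inr (NV.glob d), Sum.inr (NV.globT t)) := by
    intro d hd e he hv
    induction e using Sym2.ind with
    | _ x y =>
      rw [Sym2.mem_iff] at hv
      rcases hv with rfl | rfl
      · rcases hnbrG d hd y (hadj _ he _ _ rfl) with ⟨q, hq, hdq, rfl⟩ | rfl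
        · exact Or.inl ⟨q, hq, hdq, rfl⟩
        · exact Or.inr rfl
      · rcases hnbrG d hd x (Or.symm (hadj _ he _ _ rfl)) with ⟨q, hq, hdq, rfl⟩ | rfl
        · exact Or.inl ⟨q, hq, hdq, Sym2.eq_swap⟩
        · exact Or.inr Sym2.eq_swap
  have eclass_sub : ∀ p q : V, p ∈ t → q ∈ t → p ≠ q →
      ∀ e ∈ M', Sum.inr (NV.sub p q) ∈ e →
      e = s(Sum.inl p, Sum.inr (NV.sub p q)) ∨
      e = s(Sum.inr (NV.sub p q), Sum.inr (NV.sub q p)) ∨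
      e = s(Sum.inr (NV.glob p), Sum.inr (NV.sub p q)) := by
    intro p q hp hq hpq e he hv
    induction e using Sym2.ind with
    | _ x y =>
      rw [Sym2.mem_iff] at hv
      rcases hv with rfl | rfl
      · rcases hnbrS p q hp hq hpq y (hadj _ he _ _ rfl) with rfl | rfl | rfl
        · exact Or.inl Sym2.eq_swap
        · exact Or.inr (Or.inl rfl)
        · exact Or.inr (Or.inr Sym2.eq_swap)
      · rcases hnbrS p q hp hq hpq x (Or.symm (hadj _ he _ _ rfl)) with rfl | rfl | rfl
        · exact Or.inl rfl
        · exact Or.inr (Or.inl Sym2.eq_swap)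
        · exact Or.inr (Or.inr rfl)
  -- the edge at the triangle's global vertex
  obtain ⟨e_t, he_t, hv_t⟩ := degIn_exists (le_of_eq hdegT.symm)
  obtain ⟨d0, hd0, he_teq⟩ := eclass_globT e_t he_t hv_t
  refine ⟨?_, ?_, ?_⟩
  · -- Part 1
    have hfe : t.filter (fun d => ∃ p ∈ t, ∃ q ∈ t,
        s(Sum.inr (NV.glob d), Sum.inr (NV.sub p q)) ∈ M') = t.erase d0 := by
      ext d
      simp only [Finset.mem_filter, Finset.mem_erase]
      constructor
      · rintro ⟨hdt, p, hp, q, hq, hmem⟩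
        refine ⟨?_, hdt⟩
        rintro rfl
        have heq := degIn_unique (le_of_eq (hdegG d hd0)) hmem (by simp) he_t
          (by rw [he_teq]; simp)
        rw [he_teq] at heq
        simp [Sym2.eq_iff] at heq
      · rintro ⟨hdd0, hdt⟩
        refine ⟨hdt, ?_⟩
        obtain ⟨e_d, he_d, hv_d⟩ := degIn_exists (le_of_eq (hdegG d hdt).symm)
        rcases eclass_glob d hdt e_d he_d hv_d with ⟨q, hq, hdq, rfl⟩ | rfl
        · exact ⟨d, hdt, q, hq, he_d⟩
        · exfalso
          have heq := degIn_unique (le_of_eq hdegT) he_d (by simp) he_t hv_t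
          rw [he_teq] at heq
          rw [Sym2.eq_iff] at heq
          rcases heq with ⟨h1, -⟩ | ⟨h1, -⟩
          · simp only [Sum.inr.injEq, NV.glob.injEq] at h1
            exact hdd0 h1
          · exact absurd h1 (by simp)
    rw [hfe, Finset.card_erase_of_mem hd0, htcard]
  · -- Part 2
    intro d₁ _ d₂ _ h12 p₁ q₁ p₂ q₂ _ _ _ _ hm1 hm2
    have h1 := hadj _ hm1 _ _ rfl
    have h2 := hadj _ hm2 _ _ rfl
    have hd1 : d₁ = p₁ := by
      rcases h1 with h | h
      · exact h.1
      · exact h.elim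
    have hd2 : d₂ = p₂ := by
      rcases h2 with h | h
      · exact h.1
      · exact h.elim
    intro hc
    exact h12 (by rw [hd1, hc, ← hd2])
  · -- Part 3
    intro hc4 pq₁ hpq₁ pq₂ hpq₂ hn1 hn2 hne12
    obtain ⟨p₁, q₁⟩ := pq₁
    obtain ⟨p₂, q₂⟩ := pq₂
    rw [Finset.mem_offDiag] at hpq₁ hpq₂
    obtain ⟨hp₁, hq₁, hpq1ne⟩ := hpq₁
    obtain ⟨hp₂, hq₂, hpq2ne⟩ := hpq₂
    intro hpp
    have hpp' : p₁ = p₂ := hpp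
    subst hpp'
    have hq12 : q₁ ≠ q₂ := fun h => hne12 (by rw [h])
    set S := (t.offDiag).filter (fun pq =>
      s(Sum.inl pq.1, Sum.inr (NV.sub pq.1 pq.2)) ∈ M') with hS
    have hoffcard : t.offDiag.card = 6 := by
      rw [Finset.offDiag_card, htcard]
    have hDcard : (t.offDiag \ S).card = 2 := by
      rw [Finset.card_sdiff_of_subset (Finset.filter_subset _ _), hoffcard, hc4]
    have hmemD : ∀ q : V, q ∈ t → p₁ ≠ q →
        s(Sum.inl p₁, Sum.inr (NV.sub p₁ q)) ∉ M' → (p₁, q) ∈ t.offDiag \ S := by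
      intro q hq hne hn
      rw [Finset.mem_sdiff]
      refine ⟨Finset.mem_offDiag.mpr ⟨hp₁, hq, hne⟩, ?_⟩
      rw [hS, Finset.mem_filter]
      exact fun hh => hn hh.2
    have hmem1 := hmemD q₁ hq₁ hpq1ne hn1
    have hmem2 := hmemD q₂ hq₂ hpq2ne hn2
    have hpairne : ((p₁, q₁) : V × V) ≠ (p₁, q₂) := hne12
    have hDeq : ({(p₁, q₁), (p₁, q₂)} : Finset (V × V)) = t.offDiag \ S := by
      refine Finset.eq_of_subset_of_card_le ?_ ?_
      · intro z hz
        rcases Finset.mem_insert.mp hz with rfl | hz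
        · exact hmem1
        · rw [Finset.mem_singleton] at hz; subst hz
          exact hmem2
      · rw [hDcard, Finset.card_pair hpairne]
    have key : ∀ q : V, q ∈ t → p₁ ≠ q →
        s(Sum.inl p₁, Sum.inr (NV.sub p₁ q)) ∉ M' →
        s(Sum.inr (NV.sub p₁ q), Sum.inr (NV.sub q p₁)) ∈ M' ∨
        s(Sum.inr (NV.glob p₁), Sum.inr (NV.sub p₁ q)) ∈ M' := by
      intro q hq hne hn
      obtain ⟨e, he, hv⟩ := degIn_exists (le_of_eq (hdegS p₁ q hp₁ hq hne).symm)
      rcases eclass_sub p₁ q hp₁ hq hne e he hv with rfl | rfl | rfl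
      · exact absurd he hn
      · exact Or.inl he
      · exact Or.inr he
    have noElim : ∀ q : V, q ∈ t → p₁ ≠ q →
        s(Sum.inr (NV.sub p₁ q), Sum.inr (NV.sub q p₁)) ∈ M' → False := by
      intro q hq hne helim
      have hn' : s(Sum.inl q, Sum.inr (NV.sub q p₁)) ∉ M' := by
        intro hhalf
        have heq := degIn_unique (le_of_eq (hdegS q p₁ hq hp₁ (Ne.symm hne)))
          hhalf (by simp) helim (by simp)
        simp [Sym2.eq_iff] at heq
      have hmem' : (q, p₁) ∈ t.offDiag \ S := by
        rw [Finset.mem_sdiff]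
        refine ⟨Finset.mem_offDiag.mpr ⟨hq, hp₁, Ne.symm hne⟩, ?_⟩
        rw [hS, Finset.mem_filter]
        exact fun hh => hn' hh.2
      rw [← hDeq] at hmem'
      rcases Finset.mem_insert.mp hmem' with h | h
      · rw [Prod.mk.injEq] at h
        exact hne h.1.symm
      · rw [Finset.mem_singleton, Prod.mk.injEq] at h
        exact hne h.1.symm
    rcases key q₁ hq₁ hpq1ne hn1 with helim | hglob1
    · exact noElim q₁ hq₁ hpq1ne helim
    rcases key q₂ hq₂ hpq2ne hn2 with helim | hglob2
    · exact noElim q₂ hq₂ hpq2ne helim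
    have hne' : (s(Sum.inr (NV.glob p₁), Sum.inr (NV.sub p₁ q₁)) : Sym2 (V ⊕ NV V)) ≠
        s(Sum.inr (NV.glob p₁), Sum.inr (NV.sub p₁ q₂)) := by
      simp [Sym2.eq_iff, hq12]
    exact hne' (degIn_unique (le_of_eq (hdegG p₁ hp₁)) hglob1 (by simp) hglob2 (by simp))


end Paper
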